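/- Let u ∈ 𝒜(ℝⁿ) ∩ C²(ℝⁿ) be convex. Then for all x = (x₁,…,xₙ) ∈ [0,∞)ⁿ, (u[e])*(x) + (u*[e])*(x) ≥ Σ_{j=1}^n (x_j·ln(x_j + 1) − x_j) − n. -/

import Mathlib

open Filter
open scoped BigOperators Topology

open RealInnerProductSpace

noncomputable section

abbrev En (n : ℕ) := EuclideanSpace ℝ (Fin n)

/-- The closed positive orthant `[0,∞)ⁿ`. -/
def orthant (n : ℕ) : Set (En n) := {x | ∀ j, 0 ≤ x j}

/-- `g[e]`, the coordinatewise exponential substitution `g[e](x) = g(e^{x₁},…,e^{xₙ})`. -/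
def expComp {n : ℕ} (g : En n → ℝ) : En n → ℝ := fun x => g (WithLp.toLp 2 (fun j => Real.exp (x j)))

/-- The Young–Fenchel conjugate `g*(x) = sup_y (⟨x,y⟩ - g(y))`. -/
def starC {n : ℕ} (g : En n → ℝ) (x : En n) : ℝ := ⨆ y : En n, (∑ j, x j * y j - g y)

/-- `g ∈ ℬ(ℝⁿ)`: `g` is continuous on `ℝⁿ` and `g(x)/‖x‖ → +∞` as `x → ∞`. -/
def memBR {n : ℕ} (g : En n → ℝ) : Prop :=
  Continuous g ∧ Tendsto (fun x : En n => g x / ‖x‖) (cocompact (En n)) atTop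

/-- `g ∈ 𝒜(ℝⁿ)`: `g` is continuous, depends only on the absolute values of the
coordinates, is nondecreasing in each variable on the orthant, and `g(x)/‖x‖ → +∞`. -/
def IsA {n : ℕ} (g : En n → ℝ) : Prop :=
  Continuous g ∧ (∀ x : En n, g x = g (WithLp.toLp 2 (fun j => |x j|))) ∧
  (∀ x y : En n, (∀ j, 0 ≤ x j) → (∀ j, x j ≤ y j) → g x ≤ g y) ∧
  Tendsto (fun x : En n => g x / ‖x‖) (cocompact (En n)) atTop

namespace Stmt15Aux

variable {n : ℕ}

lemma coord_abs_le_norm (x : En n) (j : Fin n) : |x j| ≤ ‖x‖ := by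
  rw [EuclideanSpace.norm_eq]
  have h1 : |x j| ^ 2 ≤ ∑ i, ‖x i‖ ^ 2 := by
    have := Finset.single_le_sum (f := fun i => ‖x i‖ ^ 2)
      (fun i _ => sq_nonneg _) (Finset.mem_univ j)
    simpa [Real.norm_eq_abs] using this
  calc |x j| = Real.sqrt (|x j| ^ 2) := by rw [Real.sqrt_sq_eq_abs, abs_abs]
    _ ≤ _ := Real.sqrt_le_sqrt h1

lemma coord_le_norm (x : En n) (j : Fin n) : x j ≤ ‖x‖ :=
  (le_abs_self _).trans (coord_abs_le_norm x j)

lemma sum_mul_le_norm (x y : En n) : ∑ j, x j * y j ≤ ‖x‖ * ‖y‖ := by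
  have h : ∑ j, x j * y j = ⟪x, y⟫ := by
    rw [PiLp.inner_apply]; simp [RCLike.inner_apply]
    exact Finset.sum_congr rfl fun _ _ => mul_comm _ _
  rw [h]; exact real_inner_le_norm x y

lemma sum_sq_eq (q : En n) : ∑ j, q j * q j = ‖q‖ ^ 2 := by
  have h : ∑ j, q j * q j = ⟪q, q⟫ := by
    rw [PiLp.inner_apply]; simp [RCLike.inner_apply]
    exact Finset.sum_congr rfl fun _ _ => (sq _).symm
  rw [h, real_inner_self_eq_norm_sq]

/-- Superlinear growth gives affine lower bounds with arbitrary slope. -/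
lemma coercive_bound {u : En n → ℝ} (hc : Continuous u)
    (h : Tendsto (fun x : En n => u x / ‖x‖) (cocompact (En n)) atTop) (C : ℝ) :
    ∃ D : ℝ, ∀ w, C * ‖w‖ - D ≤ u w := by
  have hmem : {w : En n | C ≤ u w / ‖w‖} ∈ cocompact (En n) := h (Ici_mem_atTop C)
  obtain ⟨K, hK, hKsub⟩ := (hasBasis_cocompact.mem_iff).1 hmem
  have hK' : IsCompact (K ∪ {0}) := hK.union isCompact_singleton
  obtain ⟨z, _, hz⟩ := hK'.exists_isMaxOn (by simp)
    ((continuous_const.mul continuous_norm).sub hc).continuousOn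
  refine ⟨max (C * ‖z‖ - u z) 0, fun w => ?_⟩
  by_cases hw : w ∈ K ∪ {0}
  · have := hz hw
    simp only [Set.mem_setOf_eq] at this
    calc C * ‖w‖ - max (C * ‖z‖ - u z) 0 ≤ C * ‖w‖ - (C * ‖z‖ - u z) := by
          have := le_max_left (C * ‖z‖ - u z) (0:ℝ); linarith
      _ ≤ u w := by
          have : C * ‖w‖ - u w ≤ C * ‖z‖ - u z := this
          linarith
  · have hwK : w ∉ K := fun hh => hw (Or.inl hh)
    have hdiv : C ≤ u w / ‖w‖ := hKsub hwK
    have hw0 : w ≠ 0 := fun hh => hw (Or.inr (by simp [hh]))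
    have hnorm : 0 < ‖w‖ := norm_pos_iff.2 hw0
    have : C * ‖w‖ ≤ u w := by
      have := (le_div_iff₀ hnorm).1 hdiv
      linarith
    have h0 : (0:ℝ) ≤ max (C * ‖z‖ - u z) 0 := le_max_right _ _
    linarith

lemma bdd_conj {u : En n → ℝ} (hc : Continuous u)
    (h : Tendsto (fun x : En n => u x / ‖x‖) (cocompact (En n)) atTop) (b : En n) :
    BddAbove (Set.range fun w : En n => ∑ j, b j * w j - u w) := by
  obtain ⟨D, hD⟩ := coercive_bound hc h ‖b‖
  refine ⟨D, ?_⟩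
  rintro _ ⟨w, rfl⟩
  show ∑ j, b j * w j - u w ≤ D
  have h1 : ∑ j, b j * w j ≤ ‖b‖ * ‖w‖ := sum_mul_le_norm b w
  have h2 := hD w
  linarith

lemma starC_ge {u : En n → ℝ} (hc : Continuous u)
    (h : Tendsto (fun x : En n => u x / ‖x‖) (cocompact (En n)) atTop) (b w : En n) :
    ∑ j, b j * w j - u w ≤ starC u b :=
  le_ciSup (bdd_conj hc h b) w

/-- Tangent-plane inequality for convex differentiable functions. -/
lemma tangent {u : En n → ℝ} (hconv : ConvexOn ℝ Set.univ u) {f' : En n →L[ℝ] ℝ} {a : En n}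
    (hd : HasFDerivAt u f' a) (w : En n) : u a + f' (w - a) ≤ u w := by
  set g : ℝ → ℝ := fun t => u (AffineMap.lineMap a w t) with hg
  have hgc : ConvexOn ℝ Set.univ g := by
    have := hconv.comp_affineMap (AffineMap.lineMap a w (k := ℝ))
    exact this
  have hline : HasDerivAt (fun t : ℝ => AffineMap.lineMap a w t) (w - a) 0 := by
    simp only [AffineMap.lineMap_apply_module']
    have h1 : HasDerivAt (fun t : ℝ => t • (w - a)) ((1:ℝ) • (w - a)) 0 :=
      (hasDerivAt_id 0).smul_const (w - a)
    simpa using h1.add_const a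
  have hga : HasDerivAt g (f' (w - a)) 0 := by
    have h0 : AffineMap.lineMap a w (0:ℝ) = a := by
      simp [AffineMap.lineMap_apply_module']
    rw [hg]
    exact (h0 ▸ hd).comp_hasDerivAt 0 hline
  have := hgc.le_slope_of_hasDerivAt (Set.mem_univ (0:ℝ)) (Set.mem_univ (1:ℝ))
    one_pos hga
  have hslope : slope g 0 1 = g 1 - g 0 := by simp [slope_def_field]
  rw [hslope] at this
  have h1 : g 1 = u w := by simp [hg, AffineMap.lineMap_apply_module']
  have h0 : g 0 = u a := by simp [hg, AffineMap.lineMap_apply_module']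
  rw [h1, h0] at this
  linarith

/-- Fenchel equality at a gradient point. -/
lemma fenchel_eq {u : En n → ℝ} (hc : Continuous u)
    (h : Tendsto (fun x : En n => u x / ‖x‖) (cocompact (En n)) atTop)
    (hconv : ConvexOn ℝ Set.univ u) {f' : En n →L[ℝ] ℝ} {a : En n}
    (hd : HasFDerivAt u f' a) (b : En n) (hb : ∀ w, f' w = ∑ j, b j * w j) :
    starC u b = ∑ j, a j * b j - u a := by
  apply le_antisymm
  · apply ciSup_le
    intro w
    have ht := tangent hconv hd w
    rw [hb] at ht
    have hsub : ∀ j, (w - a) j = w j - a j := fun j => rfl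
    have hsum : ∑ j, b j * (w - a) j = ∑ j, b j * w j - ∑ j, b j * a j := by
      rw [← Finset.sum_sub_distrib]
      exact Finset.sum_congr rfl (fun j _ => by rw [hsub]; ring)
    rw [hsum] at ht
    have hcomm : ∑ j, a j * b j = ∑ j, b j * a j :=
      Finset.sum_congr rfl (fun j _ => mul_comm _ _)
    rw [hcomm]; linarith
  · have := starC_ge hc h b a
    have hcomm : ∑ j, b j * a j = ∑ j, a j * b j :=
      Finset.sum_congr rfl (fun j _ => mul_comm _ _)
    rw [hcomm] at this
    exact this


/-- Linear lower bound for the conjugate function. -/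
lemma conj_lower_linear {u : En n → ℝ} (hc : Continuous u)
    (h : Tendsto (fun x : En n => u x / ‖x‖) (cocompact (En n)) atTop)
    (C : ℝ) (hC : 0 ≤ C) :
    ∃ M : ℝ, ∀ q : En n, C * ‖q‖ - M ≤ starC u q := by
  obtain ⟨z, hzball, hmax⟩ := (isCompact_closedBall (0 : En n) C).exists_isMaxOn
    ⟨0, by simp [hC]⟩ hc.continuousOn
  refine ⟨u z, fun q => ?_⟩
  by_cases hq : q = 0
  · subst hq
    have h0 : u 0 ≤ u z := hmax (by simp [hC])
    have := starC_ge hc h (0 : En n) 0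
    simp only [show ∀ j : Fin n, (0 : En n) j = 0 from fun j => rfl, zero_mul,
      Finset.sum_const_zero, zero_sub, norm_zero, mul_zero] at this ⊢
    linarith
  · have hnq : 0 < ‖q‖ := norm_pos_iff.2 hq
    set w : En n := (C / ‖q‖) • q with hw
    have hsum : ∑ j, q j * w j = C * ‖q‖ := by
      have : ∀ j, q j * w j = (C / ‖q‖) * (q j * q j) := fun j => by
        show q j * ((C / ‖q‖) * q j) = _; ring
      rw [Finset.sum_congr rfl (fun j _ => this j), ← Finset.mul_sum, sum_sq_eq]
      rw [sq]
      field_simp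
    have hwball : w ∈ Metric.closedBall (0 : En n) C := by
      simp only [Metric.mem_closedBall, dist_zero_right, hw, norm_smul]
      rw [Real.norm_eq_abs, abs_div, abs_of_nonneg hC, abs_of_nonneg (le_of_lt hnq)]
      rw [div_mul_cancel₀ _ (ne_of_gt hnq)]
    have huw : u w ≤ u z := hmax hwball
    have := starC_ge hc h q w
    rw [hsum] at this
    linarith

/-- Existence of an interior stationary point for `u a - ∑ t j * log (a j)`. -/
lemma exists_stationary {u : En n → ℝ} (hu : IsA u) (hC2 : ContDiff ℝ 2 u)
    (t : Fin n → ℝ) (ht : ∀ j, 0 < t j) :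
    ∃ a : En n, (∀ j, 0 < a j) ∧
      ∀ w : En n, fderiv ℝ u a w = ∑ j, (t j / a j) * w j := by
  obtain ⟨hc, habs, hmono, hcoer⟩ := hu
  have hdiff : Differentiable ℝ u := hC2.differentiable (by simp)
  set T : ℝ := ∑ j, t j with hT
  have hT0 : 0 ≤ T := Finset.sum_nonneg fun j _ => (ht j).le
  obtain ⟨D, hD⟩ := coercive_bound hc hcoer (T + 1)
  set Φ : En n → ℝ := fun a => u a - ∑ j, t j * Real.log (a j) with hΦdef
  have hlogsum : ∀ a : En n, (∀ j, 0 < a j) → ∑ j, t j * Real.log (a j) ≤ T * ‖a‖ := by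
    intro a hap
    rw [hT, Finset.sum_mul]
    refine Finset.sum_le_sum fun j _ => ?_
    have hlog : Real.log (a j) ≤ ‖a‖ := by
      have := Real.log_le_sub_one_of_pos (hap j)
      have := coord_le_norm a j
      linarith
    exact mul_le_mul_of_nonneg_left hlog (ht j).le
  have hΦcoer : ∀ a : En n, (∀ j, 0 < a j) → ‖a‖ - D ≤ Φ a := by
    intro a hap
    have h1 := hD a
    have h2 := hlogsum a hap
    simp only [hΦdef]
    nlinarith [norm_nonneg a]
  set one : En n := WithLp.toLp 2 (fun _ => (1 : ℝ)) with hone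
  have honep : ∀ j, (0:ℝ) < one j := fun j => one_pos
  set c : ℝ := Φ one with hcdef
  have hu0 : ∀ a : En n, u 0 ≤ u a := by
    intro a
    rw [habs a]
    exact hmono 0 (WithLp.toLp 2 (fun j => |a j|)) (fun j => le_refl 0) (fun j => abs_nonneg _)
  set R : ℝ := max (D + c) 1 with hR
  have hR1 : (1:ℝ) ≤ R := le_max_right _ _
  have hR0 : (0:ℝ) ≤ R := le_trans zero_le_one hR1
  set L : ℝ := u 0 - c - T * R with hL
  set ε : Fin n → ℝ := fun j => min (Real.exp (L / t j)) 1 with hε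
  have hεpos : ∀ j, 0 < ε j := fun j => lt_min (Real.exp_pos _) one_pos
  have hε1 : ∀ j, ε j ≤ 1 := fun j => min_le_right _ _
  set K : Set (En n) := {a | ∀ j, a j ∈ Set.Icc (ε j) R} with hK
  -- membership in K from the sublevel condition
  have hSK : ∀ a : En n, (∀ j, 0 < a j) → Φ a ≤ c → a ∈ K := by
    intro a hap hΦa
    have hnorm : ‖a‖ ≤ R := by
      have := hΦcoer a hap
      have : ‖a‖ ≤ D + c := by linarith
      exact le_trans this (le_max_left _ _)
    intro j
    constructor
    · -- lower bound
      have hsum_ge : u 0 - c ≤ ∑ k, t k * Real.log (a k) := by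
        have h1 := hu0 a
        simp only [hΦdef] at hΦa
        linarith
      have herase : ∑ k ∈ Finset.univ.erase j, t k * Real.log (a k) ≤ T * R := by
        have h1 : ∑ k ∈ Finset.univ.erase j, t k * Real.log (a k)
            ≤ ∑ k ∈ Finset.univ.erase j, t k * R := by
          refine Finset.sum_le_sum fun k _ => ?_
          refine mul_le_mul_of_nonneg_left ?_ (ht k).le
          have := Real.log_le_sub_one_of_pos (hap k)
          have := coord_le_norm a k
          linarith
        have h2 : ∑ k ∈ Finset.univ.erase j, t k * R ≤ T * R := by
          rw [hT, Finset.sum_mul]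
          refine Finset.sum_le_sum_of_subset_of_nonneg (Finset.erase_subset _ _) ?_
          exact fun k _ _ => mul_nonneg (ht k).le hR0
        exact le_trans h1 h2
      have hj : L ≤ t j * Real.log (a j) := by
        have hsplit : ∑ k ∈ Finset.univ.erase j, t k * Real.log (a k)
            + t j * Real.log (a j) = ∑ k, t k * Real.log (a k) :=
          Finset.sum_erase_add _ _ (Finset.mem_univ j)
        rw [hL]
        linarith [hsum_ge, herase, hsplit]
      have hj2 : L / t j ≤ Real.log (a j) := by
        rw [div_le_iff₀ (ht j)] at *
        linarith [hj, mul_comm (Real.log (a j)) (t j)]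
      have : Real.exp (L / t j) ≤ a j := by
        calc Real.exp (L / t j) ≤ Real.exp (Real.log (a j)) := Real.exp_le_exp.2 hj2
          _ = a j := Real.exp_log (hap j)
      exact le_trans (min_le_left _ _) this
    · exact le_trans (coord_le_norm a j) hnorm
  have honeK : one ∈ K := fun j => ⟨hε1 j, hR1⟩
  have haposK : ∀ a ∈ K, ∀ j, 0 < a j := fun a haK j =>
    lt_of_lt_of_le (hεpos j) (haK j).1
  -- K is compact
  have hKcl : IsClosed K := by
    have : K = ⋂ j, (fun a : En n => a j) ⁻¹' Set.Icc (ε j) R := by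
      ext a; simp [hK, Set.mem_iInter]
    rw [this]
    exact isClosed_iInter fun j =>
      IsClosed.preimage (EuclideanSpace.proj (𝕜 := ℝ) j).continuous isClosed_Icc
  have hKbd : Bornology.IsBounded K := by
    rw [isBounded_iff_forall_norm_le]
    refine ⟨Real.sqrt (n * R ^ 2), fun a haK => ?_⟩
    rw [EuclideanSpace.norm_eq]
    apply Real.sqrt_le_sqrt
    have : ∀ j, ‖a j‖ ^ 2 ≤ R ^ 2 := by
      intro j
      have h1 : |a j| ≤ R := by
        rw [abs_of_pos (haposK a haK j)]; exact (haK j).2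
      calc ‖a j‖ ^ 2 = |a j| ^ 2 := by rw [Real.norm_eq_abs]
        _ ≤ R ^ 2 := by nlinarith [abs_nonneg (a j)]
    calc ∑ j, ‖a j‖ ^ 2 ≤ ∑ _j : Fin n, R ^ 2 := Finset.sum_le_sum fun j _ => this j
      _ = n * R ^ 2 := by simp [mul_comm]
  have hKcomp : IsCompact K := Metric.isCompact_of_isClosed_isBounded hKcl hKbd
  -- Φ is continuous on K
  have hΦcont : ContinuousOn Φ K := by
    apply ContinuousOn.sub hc.continuousOn
    apply continuousOn_finset_sum
    intro j _
    apply ContinuousOn.mul continuousOn_const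
    refine Real.continuousOn_log.comp
      ((EuclideanSpace.proj (𝕜 := ℝ) j).continuous.continuousOn) ?_
    intro a haK
    exact ne_of_gt (haposK a haK j)
  obtain ⟨a, haK, hamin⟩ := hKcomp.exists_isMinOn ⟨one, honeK⟩ hΦcont
  have hapos : ∀ j, 0 < a j := haposK a haK
  have hglob : ∀ w : En n, (∀ j, 0 < w j) → Φ a ≤ Φ w := by
    intro w hwp
    by_cases hw : Φ w ≤ c
    · exact hamin (hSK w hwp hw)
    · have h1 : Φ a ≤ c := hamin honeK
      linarith [not_le.1 hw]
  have hopen : IsOpen {w : En n | ∀ j, 0 < w j} := by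
    have : {w : En n | ∀ j, 0 < w j} = ⋂ j, (fun w : En n => w j) ⁻¹' Set.Ioi 0 := by
      ext w; simp [Set.mem_iInter]
    rw [this]
    exact isOpen_iInter_of_finite fun j =>
      IsOpen.preimage (EuclideanSpace.proj (𝕜 := ℝ) j).continuous isOpen_Ioi
  have hlocal : IsLocalMin Φ a := by
    have hmem : {w : En n | ∀ j, 0 < w j} ∈ 𝓝 a := hopen.mem_nhds hapos
    filter_upwards [hmem] with w hw using hglob w hw
  -- derivative of the log part
  set F : En n →L[ℝ] ℝ :=
    ∑ j, (t j / a j) • (EuclideanSpace.proj (𝕜 := ℝ) j) with hF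
  have hFd : HasFDerivAt (fun w : En n => ∑ j, t j * Real.log (w j)) F a := by
    rw [hF]
    apply HasFDerivAt.fun_sum
    intro j _
    have hlog : HasFDerivAt (fun w : En n => Real.log (w j))
        ((a j)⁻¹ • (EuclideanSpace.proj (𝕜 := ℝ) j)) a :=
      (Real.hasDerivAt_log (ne_of_gt (hapos j))).comp_hasFDerivAt (f := fun w : En n => w j) a
        (EuclideanSpace.proj (𝕜 := ℝ) j).hasFDerivAt
    have := hlog.const_mul (t j)
    have heq : (t j) • ((a j)⁻¹ • (EuclideanSpace.proj (𝕜 := ℝ) j))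
        = (t j / a j) • (EuclideanSpace.proj (𝕜 := ℝ) j) := by
      rw [smul_smul, div_eq_mul_inv]
    rwa [heq] at this
  have hΦd : HasFDerivAt Φ (fderiv ℝ u a - F) a :=
    ((hdiff a).hasFDerivAt).sub hFd
  have hzero : fderiv ℝ u a - F = 0 := hlocal.hasFDerivAt_eq_zero hΦd
  have hfeq : fderiv ℝ u a = F := by
    rwa [sub_eq_zero] at hzero
  refine ⟨a, hapos, fun w => ?_⟩
  rw [hfeq, hF]
  rw [ContinuousLinearMap.sum_apply]
  refine Finset.sum_congr rfl fun j _ => ?_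
  simp [ContinuousLinearMap.smul_apply]

end Stmt15Aux

open Stmt15Aux in
theorem stmt15 (n : ℕ) (u : En n → ℝ) (hu : IsA u)
    (hC2 : ContDiff ℝ 2 u) (hconv : ConvexOn ℝ Set.univ u) :
    ∀ x ∈ orthant n,
      starC (expComp u) x + starC (expComp (starC u)) x ≥
        (∑ j, (x j * Real.log (x j + 1) - x j)) - n := by
  intro x hx
  obtain ⟨hc, habs, hmono, hcoer⟩ := hu
  set t : Fin n → ℝ := fun j => x j + 1 with htdef
  have ht : ∀ j, 0 < t j := fun j => by
    have := hx j; simp only [htdef]; linarith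
  obtain ⟨a, hapos, hgrad⟩ := exists_stationary ⟨hc, habs, hmono, hcoer⟩ hC2 t ht
  set b : En n := WithLp.toLp 2 (fun j => t j / a j) with hbdef
  have hbpos : ∀ j, 0 < b j := fun j => div_pos (ht j) (hapos j)
  have hab : ∀ j, a j * b j = t j := fun j => by
    show a j * (t j / a j) = t j
    rw [mul_comm]
    exact div_mul_cancel₀ (t j) (ne_of_gt (hapos j))
  have hfb : ∀ w : En n, fderiv ℝ u a w = ∑ j, b j * w j := hgrad
  have hfen : starC u b = ∑ j, a j * b j - u a :=
    fenchel_eq hc hcoer hconv ((hC2.differentiable (by simp) a).hasFDerivAt) b hfb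
  obtain ⟨D, hD⟩ := coercive_bound hc hcoer ‖x‖
  have hbd1 : BddAbove (Set.range fun y : En n => ∑ j, x j * y j - expComp u y) := by
    refine ⟨D, ?_⟩
    rintro _ ⟨y, rfl⟩
    show ∑ j, x j * y j - expComp u y ≤ D
    set ey : En n := WithLp.toLp 2 (fun j => Real.exp (y j)) with hey
    have h0 : ∑ j, x j * y j ≤ ∑ j, x j * ey j := by
      refine Finset.sum_le_sum fun j _ => mul_le_mul_of_nonneg_left ?_ (hx j)
      show y j ≤ ey j
      rw [hey]
      have := Real.add_one_le_exp (y j); linarith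
    have h1 : ∑ j, x j * ey j ≤ ‖x‖ * ‖ey‖ := sum_mul_le_norm x ey
    have h2 := hD ey
    have h3 : expComp u y = u ey := rfl
    rw [h3]; linarith
  have h1 : ∑ j, x j * Real.log (a j) - u a ≤ starC (expComp u) x := by
    have hle := le_ciSup hbd1 (WithLp.toLp 2 (fun j => Real.log (a j)) : En n)
    have heq : expComp u (WithLp.toLp 2 (fun j => Real.log (a j)) : En n) = u a := by
      show u (WithLp.toLp 2 (fun j => Real.exp (Real.log (a j)))) = u a
      congr 1
      ext j
      exact Real.exp_log (hapos j)
    have this2 : ∑ j, x j * Real.log (a j)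
        - expComp u (WithLp.toLp 2 (fun j => Real.log (a j)) : En n) ≤ starC (expComp u) x := hle
    rw [heq] at this2; exact this2
  obtain ⟨M, hM⟩ := conj_lower_linear hc hcoer ‖x‖ (norm_nonneg x)
  have hbd2 : BddAbove (Set.range fun z : En n => ∑ j, x j * z j - expComp (starC u) z) := by
    refine ⟨M, ?_⟩
    rintro _ ⟨z, rfl⟩
    show ∑ j, x j * z j - expComp (starC u) z ≤ M
    set ez : En n := WithLp.toLp 2 (fun j => Real.exp (z j)) with hez
    have h0 : ∑ j, x j * z j ≤ ∑ j, x j * ez j := by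
      refine Finset.sum_le_sum fun j _ => mul_le_mul_of_nonneg_left ?_ (hx j)
      show z j ≤ ez j
      rw [hez]
      have := Real.add_one_le_exp (z j); linarith
    have h1 : ∑ j, x j * ez j ≤ ‖x‖ * ‖ez‖ := sum_mul_le_norm x ez
    have h2 := hM ez
    have h3 : expComp (starC u) z = starC u ez := rfl
    rw [h3]; linarith
  have h2 : ∑ j, x j * Real.log (b j) - starC u b ≤ starC (expComp (starC u)) x := by
    have hle := le_ciSup hbd2 (WithLp.toLp 2 (fun j => Real.log (b j)) : En n)
    have heq : expComp (starC u) (WithLp.toLp 2 (fun j => Real.log (b j)) : En n) = starC u b := by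
      show starC u (WithLp.toLp 2 (fun j => Real.exp (Real.log (b j)))) = starC u b
      congr 1
      ext j
      exact Real.exp_log (hbpos j)
    have this2 : ∑ j, x j * Real.log (b j)
        - expComp (starC u) (WithLp.toLp 2 (fun j => Real.log (b j)) : En n)
        ≤ starC (expComp (starC u)) x := hle
    rw [heq] at this2; exact this2
  rw [hfen] at h2
  have hkey : ∑ j, x j * Real.log (a j) + ∑ j, x j * Real.log (b j)
      = ∑ j, x j * Real.log (x j + 1) := by
    rw [← Finset.sum_add_distrib]
    refine Finset.sum_congr rfl fun j _ => ?_
    rw [← mul_add, ← Real.log_mul (ne_of_gt (hapos j)) (ne_of_gt (hbpos j)), hab j]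
  have habsum : ∑ j, a j * b j = ∑ j, x j + n := by
    rw [Finset.sum_congr rfl (fun j _ => hab j)]
    simp [htdef, Finset.sum_add_distrib]
  have hrhs : (∑ j, (x j * Real.log (x j + 1) - x j))
      = (∑ j, x j * Real.log (x j + 1)) - (∑ j, x j) := by
    rw [Finset.sum_sub_distrib]
  rw [ge_iff_le, hrhs]
  linarith
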